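/- Let k be a field of odd characteristic with a non-square g ∈ k×, and let K = k(√g) be obtained by adjoining a square root of g. Then the two 2-dimensional subspaces of K⁶, U₁ = span{(0,0,0,0,0,1),(1,0,0,0,0,0)} and U₄ = span{(0,0,1,1,0,0),(0,1,0,0,g,0)}, lie in the same orbit under the right action of ψ(GL₄(K)), where ψ is the exterior square representation in the lexicographic basis x₁₂,…,x₃₄. -/

import Mathlib

open Matrix

def lexPair : Fin 6 → Fin 4 × Fin 4 := ![(0,1),(0,2),(0,3),(1,2),(1,3),(2,3)]

/-- The exterior square representation `ψ : GL₄ → GL₆` in matrix form. -/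
def extSq {k : Type*} [CommRing k] (A : Matrix (Fin 4) (Fin 4) k) :
    Matrix (Fin 6) (Fin 6) k :=
  Matrix.of fun rs ij =>
    A (lexPair rs).1 (lexPair ij).1 * A (lexPair rs).2 (lexPair ij).2 -
      A (lexPair rs).2 (lexPair ij).1 * A (lexPair rs).1 (lexPair ij).2

section Aux
variable {α : Type*}

@[simp] lemma cv6_two (a b c d e f : α) : ![a,b,c,d,e,f] 2 = c := rfl
@[simp] lemma cv6_three (a b c d e f : α) : ![a,b,c,d,e,f] 3 = d := rfl
@[simp] lemma cv6_four (a b c d e f : α) : ![a,b,c,d,e,f] 4 = e := rfl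
@[simp] lemma cv6_five (a b c d e f : α) : ![a,b,c,d,e,f] 5 = f := rfl
@[simp] lemma cv4_two (a b c d : α) : ![a,b,c,d] 2 = c := rfl
@[simp] lemma cv4_three (a b c d : α) : ![a,b,c,d] 3 = d := rfl

end Aux

/-- let `k` be a field of odd characteristic, `g ∈ k×` a non-square
and `K = k(√g)`.  Then the 2-dimensional subspaces
`U₁ = span{(0,0,0,0,0,1),(1,0,0,0,0,0)}` and `U₄ = span{(0,0,1,1,0,0),(0,1,0,0,g,0)}`
of `K⁶` lie in the same orbit under the right action of `ψ(GL₄(K))`. -/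


theorem orbits_one_and_four_merge_over_sqrt_extension
    {k K : Type*} [Field k] [Field K] [Algebra k K]
    (hodd : Odd (ringChar k))
    (g : k) (hg : g ≠ 0) (hns : ∀ x : k, x ^ 2 ≠ g)
    (s : K) (hs : s ^ 2 = algebraMap k K g)
    (hK : Algebra.adjoin k {s} = ⊤) :
    ∃ A : Matrix (Fin 4) (Fin 4) K, IsUnit A.det ∧
      (Submodule.span K {![0,0,0,0,0,1], ![1,0,0,0,0,0]}).map
          (extSq A).vecMulLinear =
        Submodule.span K {![0,0,1,1,0,0], ![0,1,0,0,algebraMap k K g,0]} := by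
  set gK : K := algebraMap k K g with hgK
  have h2k : (2 : k) ≠ 0 := by
    intro h
    have hdvd : ringChar k ∣ 2 := ringChar.dvd (by exact_mod_cast h)
    rcases (Nat.dvd_prime Nat.prime_two).mp hdvd with h1 | h2
    · exact CharP.ringChar_ne_one (R := k) h1
    · rw [h2] at hodd
      simpa using Nat.odd_iff.mp hodd
  have h2K : (2 : K) ≠ 0 := by
    have h : algebraMap k K 2 = (2 : K) := map_ofNat _ 2
    rw [← h]
    exact fun h' => h2k ((map_eq_zero (algebraMap k K)).mp h')
  have hgK0 : gK ≠ 0 := fun h => hg ((map_eq_zero (algebraMap k K)).mp h)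
  have hs0 : s ≠ 0 := fun h => hgK0 (by rw [← hs, h]; ring)
  refine ⟨!![1, s, 0, 0; 0, 0, 1, s; 1, -s, 0, 0; 0, 0, -1, s], ?_, ?_⟩
  · have hdet : (!![1, s, 0, 0; 0, 0, 1, s; 1, -s, 0, 0; 0, 0, -1, s] :
        Matrix (Fin 4) (Fin 4) K).det = 4 * s ^ 2 := by
      simp [Matrix.det_succ_row_zero, Fin.sum_univ_succ]
      rw [show Fin.succAbove (1 : Fin 4) 2 = 3 from rfl]
      simp
      ring
    rw [hdet, hs]
    refine isUnit_iff_ne_zero.mpr (mul_ne_zero ?_ hgK0)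
    have h4 : (4 : K) = 2 * 2 := by norm_num
    rw [h4]
    exact mul_ne_zero h2K h2K
  · have hw1 : (extSq !![1, s, 0, 0; 0, 0, 1, s; 1, -s, 0, 0; 0, 0, -1, s]).vecMulLinear
        ![0,0,0,0,0,1] = ![0, -1, s, s, -gK, 0] := by
      funext i
      fin_cases i <;>
        simp [Matrix.vecMulLinear_apply, Matrix.vecMul, dotProduct,
          Fin.sum_univ_six, extSq, lexPair, ← hs] <;> ring
    have hw2 : (extSq !![1, s, 0, 0; 0, 0, 1, s; 1, -s, 0, 0; 0, 0, -1, s]).vecMulLinear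
        ![1,0,0,0,0,0] = ![0, 1, s, s, gK, 0] := by
      funext i
      fin_cases i <;>
        simp [Matrix.vecMulLinear_apply, Matrix.vecMul, dotProduct,
          Fin.sum_univ_six, extSq, lexPair, ← hs] <;> ring
    rw [Submodule.map_span, Set.image_insert_eq, Set.image_singleton, hw1, hw2]
    have mem1 : (![0, -1, s, s, -gK, 0] : Fin 6 → K) ∈
        Submodule.span K {![0,0,1,1,0,0], ![0,1,0,0,gK,0]} := by
      have h : (![0, -1, s, s, -gK, 0] : Fin 6 → K) =
          s • ![0,0,1,1,0,0] + (-1 : K) • ![0,1,0,0,gK,0] := by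
        funext i; fin_cases i <;> simp
      rw [h]
      exact Submodule.add_mem _
        (Submodule.smul_mem _ _ (Submodule.subset_span (by simp)))
        (Submodule.smul_mem _ _ (Submodule.subset_span (by simp)))
    have mem2 : (![0, 1, s, s, gK, 0] : Fin 6 → K) ∈
        Submodule.span K {![0,0,1,1,0,0], ![0,1,0,0,gK,0]} := by
      have h : (![0, 1, s, s, gK, 0] : Fin 6 → K) =
          s • ![0,0,1,1,0,0] + (1 : K) • ![0,1,0,0,gK,0] := by
        funext i; fin_cases i <;> simp
      rw [h]
      exact Submodule.add_mem _
        (Submodule.smul_mem _ _ (Submodule.subset_span (by simp)))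
        (Submodule.smul_mem _ _ (Submodule.subset_span (by simp)))
    have mem3 : (![0,0,1,1,0,0] : Fin 6 → K) ∈
        Submodule.span K {![0, -1, s, s, -gK, 0], ![0, 1, s, s, gK, 0]} := by
      have h : (![0,0,1,1,0,0] : Fin 6 → K) =
          (2*s)⁻¹ • ![0, -1, s, s, -gK, 0] + (2*s)⁻¹ • ![0, 1, s, s, gK, 0] := by
        funext i
        fin_cases i <;> simp <;> field_simp <;> ring
      rw [h]
      exact Submodule.add_mem _
        (Submodule.smul_mem _ _ (Submodule.subset_span (by simp)))
        (Submodule.smul_mem _ _ (Submodule.subset_span (by simp)))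
    have mem4 : (![0,1,0,0,gK,0] : Fin 6 → K) ∈
        Submodule.span K {![0, -1, s, s, -gK, 0], ![0, 1, s, s, gK, 0]} := by
      have h : (![0,1,0,0,gK,0] : Fin 6 → K) =
          (-2⁻¹ : K) • ![0, -1, s, s, -gK, 0] + (2⁻¹ : K) • ![0, 1, s, s, gK, 0] := by
        funext i
        fin_cases i <;> simp <;> field_simp <;> ring
      rw [h]
      exact Submodule.add_mem _
        (Submodule.smul_mem _ _ (Submodule.subset_span (by simp)))
        (Submodule.smul_mem _ _ (Submodule.subset_span (by simp)))
    apply le_antisymm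
    · rw [Submodule.span_le]
      rintro v (rfl | rfl)
      · exact mem1
      · exact mem2
    · rw [Submodule.span_le]
      rintro v (rfl | rfl)
      · exact mem3
      · exact mem4
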